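/- Let D be a digraph with arc-weighting w, and let u ≠ v be vertices such that for every vertex x, if x → u is an arc with w(xu) > 0 then x → v is an arc of D. Let D' with arc-weighting w' be the contraction of u to v. Then for every vertex y ∈ V ∖ {u}, the neighborhood weight difference does not increase: δ^{D'}_y ≤ δ^D_y. In particular, if every vertex of D is strongly contracting, then every vertex of D' is strongly contracting. -/
import Mathlib


open Finset

/-- The first out-neighborhood of `v`: all `u` with `v → u`. -/
def firstNbhd {V : Type*} [Fintype V] (adj : V → V → Prop) [DecidableRel adj] (v : V) :
    Finset V :=
  Finset.univ.filter (fun u => adj v u)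

/-- The second out-neighborhood of `v`: all `u ≠ v` with `¬ v → u` and `v → x → u` for some `x`. -/
def secondNbhd {V : Type*} [Fintype V] [DecidableEq V] (adj : V → V → Prop)
    [DecidableRel adj] (v : V) : Finset V :=
  Finset.univ.filter (fun u => u ≠ v ∧ ¬ adj v u ∧ ∃ x, adj v x ∧ adj x u)

/-- First neighborhood weight `α_v = Σ_{u ∈ N1+(v)} w(vu)`. -/
def alphaW {V : Type*} [Fintype V] (adj : V → V → Prop) [DecidableRel adj]
    (w : V → V → ℝ) (v : V) : ℝ :=
  ∑ u ∈ firstNbhd adj v, w v u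

/-- `β_v(s) = max({0} ∪ {w(us) − w(vs) : v → u and u → s})`. -/
noncomputable def betaS {V : Type*} [Fintype V] (adj : V → V → Prop) [DecidableRel adj]
    (w : V → V → ℝ) (v s : V) : ℝ :=
  (insert (0 : ℝ)
    ((Finset.univ.filter (fun u => adj v u ∧ adj u s)).image (fun u => w u s - w v s))).max'
    (Finset.insert_nonempty _ _)

/-- Second neighborhood weight `β_v = Σ_{s ∈ V} β_v(s)`. -/
noncomputable def betaW {V : Type*} [Fintype V] (adj : V → V → Prop) [DecidableRel adj]
    (w : V → V → ℝ) (v : V) : ℝ :=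
  ∑ s, betaS adj w v s

/-- Neighborhood weight difference `δ_v = β_v − α_v`. -/
noncomputable def deltaW {V : Type*} [Fintype V] (adj : V → V → Prop) [DecidableRel adj]
    (w : V → V → ℝ) (v : V) : ℝ :=
  betaW adj w v - alphaW adj w v


lemma betaS_nonneg' {V : Type*} [Fintype V] (adj : V → V → Prop) [DecidableRel adj]
    (w : V → V → ℝ) (v s : V) : 0 ≤ betaS adj w v s :=
  Finset.le_max' _ 0 (Finset.mem_insert_self _ _)

lemma le_betaS' {V : Type*} [Fintype V] (adj : V → V → Prop) [DecidableRel adj]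
    (w : V → V → ℝ) {v s a : V} (h1 : adj v a) (h2 : adj a s) :
    w a s - w v s ≤ betaS adj w v s := by
  apply Finset.le_max'
  apply Finset.mem_insert_of_mem
  exact Finset.mem_image_of_mem _ (Finset.mem_filter.mpr ⟨Finset.mem_univ a, h1, h2⟩)

lemma betaS_le' {V : Type*} [Fintype V] (adj : V → V → Prop) [DecidableRel adj]
    (w : V → V → ℝ) {v s : V} {c : ℝ} (hc : 0 ≤ c)
    (h : ∀ a, adj v a → adj a s → w a s - w v s ≤ c) : betaS adj w v s ≤ c := by
  apply Finset.max'_le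
  intro x hx
  rcases Finset.mem_insert.mp hx with rfl | hx
  · exact hc
  · obtain ⟨a, ha, rfl⟩ := Finset.mem_image.mp hx
    have := Finset.mem_filter.mp ha
    exact h a this.2.1 this.2.2

lemma alphaW_eq_sum' {V : Type*} [Fintype V] (adj : V → V → Prop) [DecidableRel adj]
    (w : V → V → ℝ) (y : V) (h0 : ∀ b, ¬ adj y b → w y b = 0) :
    alphaW adj w y = ∑ b, w y b := by
  unfold alphaW firstNbhd
  refine Finset.sum_filter_of_ne ?_
  intro b _ hb
  by_contra h
  exact hb (h0 b h)

lemma sum_contract' {V : Type*} [Fintype V] [DecidableEq V] (u v : V) (hvu : v ≠ u)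
    (g : V → ℝ) :
    (∑ b : {x : V // x ≠ u}, (if b.1 = v then g v + g u else g b.1)) = ∑ b, g b := by
  rw [← Finset.sum_subtype (Finset.univ.erase u) (by simp) (fun b => if b = v then g v + g u else g b)]
  have h1 : ∀ b ∈ Finset.univ.erase u, (if b = v then g v + g u else g b)
      = g b + (if b = v then g u else 0) := by
    intro b _; by_cases h : b = v <;> simp [h]
  rw [Finset.sum_congr rfl h1, Finset.sum_add_distrib, Finset.sum_ite_eq' (Finset.univ.erase u) v (fun _ => g u),
    if_pos (Finset.mem_erase.mpr ⟨hvu, Finset.mem_univ _⟩), Finset.sum_erase_add _ _ (Finset.mem_univ u)]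

/-- **Contraction does not increase neighborhood weight differences.**
Let `u ≠ v` be vertices of an arc-weighted digraph such that every positive-weight arc
into `u` comes from an in-neighbor of `v`.  The contraction of `u` to `v` is the digraph
induced on `V ∖ {u}` whose weighting adds the weight of each arc `x → u` to `x → v`.
Then `δ^{D'}_y ≤ δ^D_y` for every remaining vertex `y`; in particular, if every vertex
of `D` is strongly contracting, then every vertex of `D'` is strongly contracting. -/
theorem contraction_delta_le
    {V : Type*} [Fintype V] [DecidableEq V]
    (adj : V → V → Prop) [DecidableRel adj]
    (hirr : ∀ a, ¬ adj a a)
    (hasym : ∀ a b, adj a b → ¬ adj b a)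
    (w : V → V → ℝ)
    (hw_nonneg : ∀ a b, 0 ≤ w a b)
    (hw_arc : ∀ a b, ¬ adj a b → w a b = 0)
    (u v : V) (huv : u ≠ v)
    (hcontr : ∀ x, adj x u → 0 < w x u → adj x v) :
    (∀ y : {x : V // x ≠ u},
        deltaW (fun a b : {x : V // x ≠ u} => adj a.1 b.1)
          (fun a b : {x : V // x ≠ u} =>
            if b.1 = v then w a.1 v + w a.1 u else w a.1 b.1) y
        ≤ deltaW adj w y.1)
    ∧ ((∀ z : V, deltaW adj w z < 0) →
        ∀ y : {x : V // x ≠ u},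
          deltaW (fun a b : {x : V // x ≠ u} => adj a.1 b.1)
            (fun a b : {x : V // x ≠ u} =>
              if b.1 = v then w a.1 v + w a.1 u else w a.1 b.1) y < 0) := by
  set adj' : {x : V // x ≠ u} → {x : V // x ≠ u} → Prop := fun a b => adj a.1 b.1 with hadj'
  set w' : {x : V // x ≠ u} → {x : V // x ≠ u} → ℝ := fun a b =>
    if b.1 = v then w a.1 v + w a.1 u else w a.1 b.1 with hw'
  -- every vertex not pointing to v has zero weight to u
  have hwu0 : ∀ a : V, ¬ adj a v → w a u = 0 := by
    intro a hav
    by_cases hau : adj a u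
    · rcases lt_or_eq_of_le (hw_nonneg a u) with h | h
      · exact absurd (hcontr a hau h) hav
      · exact h.symm
    · exact hw_arc a u hau
  have main : ∀ y : {x : V // x ≠ u}, deltaW adj' w' y ≤ deltaW adj w y.1 := by
    intro y
    -- alpha equality
    have halpha : alphaW adj' w' y = alphaW adj w y.1 := by
      have h1 : alphaW adj' w' y = ∑ b : {x : V // x ≠ u}, w' y b := by
        apply alphaW_eq_sum'
        intro b hb
        simp only [hw']
        by_cases hbv : b.1 = v
        · rw [if_pos hbv]
          have h2 : ¬ adj y.1 v := hbv ▸ hb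
          rw [hw_arc y.1 v h2, hwu0 y.1 h2, add_zero]
        · rw [if_neg hbv]
          exact hw_arc y.1 b.1 hb
      have h2 : alphaW adj w y.1 = ∑ b, w y.1 b :=
        alphaW_eq_sum' adj w y.1 (fun b hb => hw_arc y.1 b hb)
      rw [h1, h2]
      by_cases hyv : adj y.1 v
      · exact sum_contract' u v huv.symm (w y.1)
      · have := hwu0 y.1 hyv
        have h3 : (∑ b : {x : V // x ≠ u}, w' y b)
            = ∑ b : {x : V // x ≠ u}, (if b.1 = v then w y.1 v + w y.1 u else w y.1 b.1) := rfl
        rw [h3]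
        exact sum_contract' u v huv.symm (w y.1)
    -- beta bound
    have hbeta : betaW adj' w' y ≤ betaW adj w y.1 := by
      have hle : ∀ s : {x : V // x ≠ u}, betaS adj' w' y s ≤
          (if s.1 = v then betaS adj w y.1 v + betaS adj w y.1 u else betaS adj w y.1 s.1) := by
        intro s
        by_cases hsv : s.1 = v
        · rw [if_pos hsv]
          apply betaS_le'
          · exact add_nonneg (betaS_nonneg' adj w y.1 v) (betaS_nonneg' adj w y.1 u)
          · intro a hya has
            have hav : adj a.1 v := hsv ▸ has
            have h1 : w' a s = w a.1 v + w a.1 u := by simp [hw', hsv]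
            have h2 : w' y s = w y.1 v + w y.1 u := by simp [hw', hsv]
            rw [h1, h2]
            have hb1 : w a.1 v - w y.1 v ≤ betaS adj w y.1 v := le_betaS' adj w hya hav
            have hb2 : w a.1 u - w y.1 u ≤ betaS adj w y.1 u := by
              by_cases hau : adj a.1 u
              · exact le_betaS' adj w hya hau
              · rw [hw_arc a.1 u hau]
                have : 0 - w y.1 u ≤ 0 := by
                  simp [hw_nonneg y.1 u]
                exact this.trans (betaS_nonneg' adj w y.1 u)
            linarith
        · rw [if_neg hsv]
          apply betaS_le'
          · exact betaS_nonneg' adj w y.1 s.1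
          · intro a hya has
            have h1 : w' a s = w a.1 s.1 := by simp [hw', hsv]
            have h2 : w' y s = w y.1 s.1 := by simp [hw', hsv]
            rw [h1, h2]
            exact le_betaS' adj w hya has
      calc betaW adj' w' y ≤ ∑ s : {x : V // x ≠ u},
            (if s.1 = v then betaS adj w y.1 v + betaS adj w y.1 u else betaS adj w y.1 s.1) :=
            Finset.sum_le_sum (fun s _ => hle s)
        _ = ∑ s, betaS adj w y.1 s := sum_contract' u v huv.symm (betaS adj w y.1)
        _ = betaW adj w y.1 := rfl
    unfold deltaW
    rw [halpha]
    exact sub_le_sub_right hbeta _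
  exact ⟨main, fun h y => (main y).trans_lt (h y.1)⟩
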